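/- Let V be a finite set, E ⊆ V × V a set of ordered pairs (i, j) with i ≠ j, p ∈ ℤ^V, functions φ_i : ℤ → ℝ for i ∈ V, and convex functions ψ_ij : ℤ → ℝ for (i, j) ∈ E (i.e., ψ_ij(k−1) + ψ_ij(k+1) ≥ 2ψ_ij(k) for all k ∈ ℤ). Define g : {0, 1}^V → ℝ by g(d) = Σ_{i∈V} φ_i(p_i + d_i) + Σ_{(i,j)∈E} ψ_ij(p_j + d_j − p_i − d_i). Then g is submodular: g(d ∨ d′) + g(d ∧ d′) ≤ g(d) + g(d′) for all d, d′ ∈ {0, 1}^V, where ∨ and ∧ denote the componentwise maximum and minimum. -/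

import Mathlib

/-- The local objective `g(d) = Σ_i φ_i(p_i + d_i) + Σ_{(i,j)∈E} ψ_{ij}(p_j + d_j − p_i − d_i)`
of the steepest-descent step for discrete energy minimization, with each `ψ_{ij}` discretely
convex, is submodular on `{0,1}^V`: `g(d ∨ d′) + g(d ∧ d′) ≤ g(d) + g(d′)`. -/
theorem stmt19 {V : Type*} [Fintype V] (E : Finset (V × V))
    (hE : ∀ e ∈ E, e.1 ≠ e.2) (p : V → ℤ)
    (φ : V → ℤ → ℝ) (ψ : V × V → ℤ → ℝ)
    (hψ : ∀ e ∈ E, ∀ k : ℤ, 2 * ψ e k ≤ ψ e (k - 1) + ψ e (k + 1)) :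
    ∀ d d' : V → ℤ, (∀ i, d i = 0 ∨ d i = 1) → (∀ i, d' i = 0 ∨ d' i = 1) →
      ((∑ i, φ i (p i + max (d i) (d' i))) +
          ∑ e ∈ E, ψ e (p e.2 + max (d e.2) (d' e.2) - p e.1 - max (d e.1) (d' e.1))) +
        ((∑ i, φ i (p i + min (d i) (d' i))) +
          ∑ e ∈ E, ψ e (p e.2 + min (d e.2) (d' e.2) - p e.1 - min (d e.1) (d' e.1))) ≤
      ((∑ i, φ i (p i + d i)) + ∑ e ∈ E, ψ e (p e.2 + d e.2 - p e.1 - d e.1)) +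
        ((∑ i, φ i (p i + d' i)) + ∑ e ∈ E, ψ e (p e.2 + d' e.2 - p e.1 - d' e.1)) := by
  intro d d' hd hd'
  have hφ : ((∑ i, φ i (p i + max (d i) (d' i))) + ∑ i, φ i (p i + min (d i) (d' i)))
      = (∑ i, φ i (p i + d i)) + ∑ i, φ i (p i + d' i) := by
    rw [← Finset.sum_add_distrib, ← Finset.sum_add_distrib]
    refine Finset.sum_congr rfl fun i _ => ?_
    rcases le_total (d i) (d' i) with h | h
    · rw [max_eq_right h, min_eq_left h]; try ring
    · rw [max_eq_left h, min_eq_right h]; try ring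
  have hψ2 : ((∑ e ∈ E, ψ e (p e.2 + max (d e.2) (d' e.2) - p e.1 - max (d e.1) (d' e.1))) +
      ∑ e ∈ E, ψ e (p e.2 + min (d e.2) (d' e.2) - p e.1 - min (d e.1) (d' e.1)))
      ≤ (∑ e ∈ E, ψ e (p e.2 + d e.2 - p e.1 - d e.1)) +
        ∑ e ∈ E, ψ e (p e.2 + d' e.2 - p e.1 - d' e.1) := by
    rw [← Finset.sum_add_distrib, ← Finset.sum_add_distrib]
    refine Finset.sum_le_sum fun e he => ?_
    have key := hψ e he (p e.2 - p e.1)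
    rcases hd e.1 with h1 | h1 <;> rcases hd e.2 with h2 | h2 <;>
      rcases hd' e.1 with h3 | h3 <;> rcases hd' e.2 with h4 | h4 <;>
      simp only [h1, h2, h3, h4] <;> norm_num <;>
      first
        | linarith [key]
        | (ring_nf at key ⊢; linarith)
  linarith
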